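/- Let T be a finite cubic Halin tree (a tree with at least 2 vertices in which every vertex has degree 1 or degree 3), and let G be the graph obtained from T by isomorphic leaf matching. Then G is a minimal bipartite matching covered graph satisfying |V2| = n/2 + 2, i.e. 2·|V2| = n + 4, where n is the number of vertices and V2 the set of degree-2 vertices of G. -/

import Mathlib

open SimpleGraph

/-- The degree of a vertex `v` in a graph `G`: the number of neighbours of `v`. -/
noncomputable def degN {V : Type*} (G : SimpleGraph V) (v : V) : ℕ :=
  (G.neighborSet v).ncard

/-- A finite simple graph is matching covered if it is connected, has at least 4 vertices,
and every edge lies in some perfect matching. -/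
def MatchingCovered {V : Type*} [Fintype V] (G : SimpleGraph V) : Prop :=
  G.Connected ∧ 4 ≤ Fintype.card V ∧
    ∀ e ∈ G.edgeSet, ∃ M : G.Subgraph, M.IsPerfectMatching ∧ e ∈ M.edgeSet

/-- A matching covered graph is minimal if deleting any edge destroys the property. -/
def MinimalMatchingCovered {V : Type*} [Fintype V] (G : SimpleGraph V) : Prop :=
  MatchingCovered G ∧ ∀ e ∈ G.edgeSet, ¬ MatchingCovered (G.deleteEdges {e})

/-- The graph obtained from a tree `T` by isomorphic leaf matching: two disjoint copies of `T`
(the `inl` copy and the `inr` copy), together with an edge joining the two copies of each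
leaf (degree-1 vertex) of `T`. -/
def leafMatching {V : Type*} (T : SimpleGraph V) : SimpleGraph (V ⊕ V) where
  Adj x y :=
    match x, y with
    | Sum.inl u, Sum.inl v => T.Adj u v
    | Sum.inr u, Sum.inr v => T.Adj u v
    | Sum.inl u, Sum.inr v => u = v ∧ degN T u = 1
    | Sum.inr u, Sum.inl v => u = v ∧ degN T v = 1
  symm := by
    refine ⟨?_⟩
    rintro (u | u) (v | v) h
    · exact h.symm
    · exact ⟨h.1.symm, h.2⟩
    · exact ⟨h.1.symm, h.2⟩
    · exact h.symm
  loopless := by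
    refine ⟨?_⟩
    rintro (u | u) h
    · exact T.loopless.irrefl u h
    · exact T.loopless.irrefl u h

section Aux
variable {V : Type*}

lemma degN_eq_degree [Fintype V] (G : SimpleGraph V) [DecidableRel G.Adj] (v : V) :
    degN G v = G.degree v := by
  rw [degN, ← SimpleGraph.card_neighborSet_eq_degree, Set.ncard_eq_toFinset_card']
  simp [Set.toFinset_card]

lemma neighborSet_singleton_of_degN_one {G : SimpleGraph V} {u v : V}
    (h : degN G u = 1) (hadj : G.Adj u v) : G.neighborSet u = {v} := by
  have hfin : (G.neighborSet u).Finite := by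
    rcases Set.finite_or_infinite (G.neighborSet u) with h' | h'
    · exact h'
    · rw [degN, h'.ncard] at h; omega
  obtain ⟨w, hw⟩ := (Set.ncard_eq_one).mp h
  have : v ∈ G.neighborSet u := hadj
  rw [hw] at this ⊢
  simp_all

lemma walk_confined {G : SimpleGraph V} {u v : V}
    (hu : G.neighborSet u = {v}) (hv : G.neighborSet v = {u}) :
    ∀ {a b : V}, G.Walk a b → a ∈ ({u, v} : Set V) → b ∈ ({u, v} : Set V) := by
  intro a b w
  induction w with
  | nil => exact fun h => h
  | cons hadj _ ih =>
    rename_i x y z _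
    intro hx
    apply ih
    rcases hx with hx | hx
    · have h2 : y ∈ G.neighborSet u := hx ▸ hadj
      rw [hu] at h2; simp_all
    · have h2 : y ∈ G.neighborSet v := hx ▸ hadj
      rw [hv] at h2; simp_all

lemma degN_pos_of_connected [Fintype V] {G : SimpleGraph V} (hc : G.Connected)
    (hcard : 2 ≤ Fintype.card V) (x : V) : 1 ≤ degN G x := by
  obtain ⟨y, hy⟩ := Fintype.exists_ne_of_one_lt_card (by omega) x
  obtain ⟨w⟩ := hc.preconnected y x
  have hne : (G.neighborSet x).Nonempty := by
    obtain ⟨w'⟩ := hc.preconnected x y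
    cases w' with
    | nil => exact absurd rfl hy.symm
    | cons h p => exact ⟨_, h⟩
  have : 0 < degN G x := by
    rw [degN, Set.ncard_pos (Set.toFinite _)]
    exact hne
  omega

end Aux

section Counting
variable {V : Type*} [Fintype V] {T : SimpleGraph V}

lemma tree_sum_degN (hT : T.IsTree) : ∑ v, degN T v + 2 = 2 * Fintype.card V := by
  classical
  have h1 : ∑ v, T.degree v = 2 * T.edgeFinset.card :=
    T.sum_degrees_eq_twice_card_edges
  have h2 := hT.card_edgeFinset
  have h3 : ∑ v, degN T v = ∑ v, T.degree v := by
    apply Finset.sum_congr rfl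
    intro v _
    exact degN_eq_degree T v
  omega

/-- A finite tree on at least two vertices has a leaf. -/
lemma exists_leaf (hT : T.IsTree) (hcard : 2 ≤ Fintype.card V) :
    ∃ ℓ : V, degN T ℓ = 1 := by
  by_contra h
  push_neg at h
  have h1 : ∀ v : V, 2 ≤ degN T v := by
    intro v
    have := degN_pos_of_connected hT.isConnected hcard v
    have := h v
    omega
  have h2 : 2 * Fintype.card V ≤ ∑ v, degN T v := by
    calc 2 * Fintype.card V = ∑ _v : V, 2 := by
          rw [Finset.sum_const, Finset.card_univ]; ring
      _ ≤ ∑ v, degN T v := Finset.sum_le_sum (fun v _ => h1 v)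
  have := tree_sum_degN hT
  omega

/-- In a tree on ≥ 3 vertices with an edge `uv`, some vertex outside `{u, v}`
is a leaf. -/
lemma exists_leaf_outside (hT : T.IsTree) (hcard : 3 ≤ Fintype.card V)
    {u v : V} (huv : T.Adj u v) :
    ∃ ℓ : V, degN T ℓ = 1 ∧ ℓ ≠ u ∧ ℓ ≠ v := by
  classical
  by_contra h
  push_neg at h
  have hne : u ≠ v := huv.ne
  have hcard2 : 2 ≤ Fintype.card V := by omega
  have h1 : ∀ x : V, x ≠ u → x ≠ v → 2 ≤ degN T x := by
    intro x hxu hxv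
    rcases Nat.lt_or_ge (degN T x) 2 with h3 | h3
    · have h4 := degN_pos_of_connected hT.isConnected hcard2 x
      have h5 : degN T x = 1 := by omega
      exact absurd (h x h5 hxu) hxv
    · exact h3
  have key : degN T u + degN T v + 2 * (Fintype.card V - 2) ≤ ∑ x, degN T x := by
    have hsplit := Finset.sum_add_sum_compl ({u, v} : Finset V) (fun x => degN T x)
    have huv' : ∑ x ∈ ({u, v} : Finset V), degN T x = degN T u + degN T v :=
      Finset.sum_pair hne
    have hcardc : (({u, v} : Finset V)ᶜ).card = Fintype.card V - 2 := by
      rw [Finset.card_compl, Finset.card_pair hne]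
    have hge : 2 * (Fintype.card V - 2) ≤ ∑ x ∈ ({u, v} : Finset V)ᶜ, degN T x := by
      calc 2 * (Fintype.card V - 2) = ∑ _x ∈ ({u, v} : Finset V)ᶜ, 2 := by
            rw [Finset.sum_const, hcardc]; ring
        _ ≤ ∑ x ∈ ({u, v} : Finset V)ᶜ, degN T x :=
            Finset.sum_le_sum (fun x hx => by
              simp only [Finset.mem_compl, Finset.mem_insert, Finset.mem_singleton] at hx
              push_neg at hx
              exact h1 x hx.1 hx.2)
    omega
  have hsum := tree_sum_degN hT
  have hpu := degN_pos_of_connected hT.isConnected hcard2 u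
  have hpv := degN_pos_of_connected hT.isConnected hcard2 v
  have hu1 : degN T u = 1 := by omega
  have hv1 : degN T v = 1 := by omega
  have hnu : T.neighborSet u = {v} := neighborSet_singleton_of_degN_one hu1 huv
  have hnv : T.neighborSet v = {u} := neighborSet_singleton_of_degN_one hv1 huv.symm
  have hsub : ∀ x : V, x ∈ ({u, v} : Set V) := by
    intro x
    obtain ⟨w⟩ := hT.isConnected.preconnected u x
    exact walk_confined hnu hnv w (by simp)
  have hle : Fintype.card V ≤ 2 := by
    have hss : (Finset.univ : Finset V) ⊆ {u, v} := by
      intro x _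
      have := hsub x
      simp_all
    calc Fintype.card V = (Finset.univ : Finset V).card := rfl
      _ ≤ ({u, v} : Finset V).card := Finset.card_le_card hss
      _ ≤ 2 := (Finset.card_insert_le _ _).trans (by simp)
  omega

end Counting

section Comap
variable {V : Type*} {T : SimpleGraph V} {ℓ : V}

/-- If `ℓ` has a unique neighbor, any walk between vertices other than `ℓ` can avoid `ℓ`. -/
lemma exists_walk_avoiding {p : V} (hn : T.neighborSet ℓ = {p})
    {a b : V} (ha : a ≠ ℓ) (hb : b ≠ ℓ) (w : T.Walk a b) :
    ∃ w' : T.Walk a b, ℓ ∉ w'.support := by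
  classical
  by_cases hmem : ℓ ∈ w.bypass.support
  · have hpath : w.bypass.IsPath := SimpleGraph.Walk.bypass_isPath w
    set q := w.bypass with hq
    -- decompose
    have h1 : (q.takeUntil ℓ hmem).IsPath := hpath.takeUntil hmem
    have h2 : (q.dropUntil ℓ hmem).IsPath := hpath.dropUntil hmem
    -- takeUntil reversed is a nonnil walk from ℓ
    obtain ⟨x, hx, r1, hr1⟩ :=
      SimpleGraph.Walk.exists_eq_cons_of_ne (Ne.symm ha) (q.takeUntil ℓ hmem).reverse
    obtain ⟨y, hy, r2, hr2⟩ :=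
      SimpleGraph.Walk.exists_eq_cons_of_ne (fun h => hb h.symm) (q.dropUntil ℓ hmem)
    have hxy : x = y := by
      have hx' : x ∈ T.neighborSet ℓ := hx
      have hy' : y ∈ T.neighborSet ℓ := hy
      rw [hn] at hx' hy'
      simp_all
    have hℓr1 : ℓ ∉ r1.support := by
      have hrev : (q.takeUntil ℓ hmem).reverse.IsPath := h1.reverse
      rw [hr1, SimpleGraph.Walk.cons_isPath_iff] at hrev
      exact hrev.2
    have hℓr2 : ℓ ∉ r2.support := by
      rw [hr2, SimpleGraph.Walk.cons_isPath_iff] at h2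
      exact h2.2
    subst hxy
    refine ⟨r1.reverse.append r2, ?_⟩
    rw [SimpleGraph.Walk.mem_support_append_iff]
    push_neg
    constructor
    · rw [SimpleGraph.Walk.support_reverse, List.mem_reverse]; exact hℓr1
    · exact hℓr2
  · exact ⟨w.bypass, hmem⟩

/-- Lift a walk avoiding `ℓ` to the induced subgraph on `{x // x ≠ ℓ}`. -/
lemma lift_walk_avoiding :
    ∀ {a b : V} (w : T.Walk a b) (_hw : ℓ ∉ w.support) (ha : a ≠ ℓ) (hb : b ≠ ℓ),
      (T.comap (Subtype.val : {x : V // x ≠ ℓ} → V)).Reachable ⟨a, ha⟩ ⟨b, hb⟩ := by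
  intro a b w
  induction w with
  | nil => intro _ ha _; exact Reachable.refl _
  | cons hadj w' ih =>
    rename_i x y z
    intro hw ha hb
    have hy : y ≠ ℓ := by
      intro h
      exact hw (by rw [SimpleGraph.Walk.support_cons]; right; exact h ▸ w'.start_mem_support)
    have h1 : ℓ ∉ w'.support := fun h => hw (by simp [SimpleGraph.Walk.support_cons, h])
    exact (SimpleGraph.Adj.reachable (by exact hadj :
      (T.comap (Subtype.val : {x : V // x ≠ ℓ} → V)).Adj ⟨x, ha⟩ ⟨y, hy⟩)).trans (ih h1 hy hb)

/-- Deleting a leaf from a tree gives a tree. -/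
lemma comap_isTree (hT : T.IsTree) (hℓ : degN T ℓ = 1) {p : V} (hp : T.Adj ℓ p) :
    (T.comap (Subtype.val : {x : V // x ≠ ℓ} → V)).IsTree := by
  have hn : T.neighborSet ℓ = {p} := neighborSet_singleton_of_degN_one hℓ hp
  haveI : Nonempty {x : V // x ≠ ℓ} := ⟨⟨p, hp.ne'⟩⟩
  constructor
  · constructor
    intro a b
    obtain ⟨w⟩ := hT.isConnected.preconnected a.1 b.1
    obtain ⟨w', hw'⟩ := exists_walk_avoiding hn a.2 b.2 w
    have := lift_walk_avoiding w' hw' a.2 b.2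
    convert this
  · intro a c hc
    have hinj : Function.Injective (Subtype.val : {x : V // x ≠ ℓ} → V) :=
      Subtype.val_injective
    exact hT.IsAcyclic (c.map ⟨Subtype.val, id⟩) (hc.map hinj)

end Comap

section DegComap
variable {V : Type*} {T : SimpleGraph V} {ℓ : V}

lemma degN_comap_eq {w : V} (hw : w ≠ ℓ) (hadj : ¬ T.Adj w ℓ) :
    degN (T.comap (Subtype.val : {x : V // x ≠ ℓ} → V)) ⟨w, hw⟩ = degN T w := by
  unfold degN
  have himg : (Subtype.val : {x : V // x ≠ ℓ} → V) ''
      ((T.comap (Subtype.val : {x : V // x ≠ ℓ} → V)).neighborSet ⟨w, hw⟩)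
      = T.neighborSet w := by
    ext y
    simp only [Set.mem_image, SimpleGraph.mem_neighborSet, SimpleGraph.comap_adj]
    constructor
    · rintro ⟨⟨y', hy'⟩, h1, rfl⟩; exact h1
    · intro h
      have hyℓ : y ≠ ℓ := by
        rintro rfl
        exact hadj h
      exact ⟨⟨y, hyℓ⟩, h, rfl⟩
  rw [← himg, Set.ncard_image_of_injective _ Subtype.val_injective]

end DegComap

section TreeMatching

universe u

/-- Key lemma: every finite tree with a distinguished edge `uv` admits a matching
(encoded as an involution) containing `uv` and covering every vertex of degree ≥ 2. -/
lemma tree_matching_through_edge :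
    ∀ (n : ℕ), ∀ {V : Type u} [Fintype V] (T : SimpleGraph V), Fintype.card V = n →
      T.IsTree → ∀ {u v : V}, T.Adj u v →
      ∃ f : V → V, Function.Involutive f ∧ (∀ x, f x ≠ x → T.Adj x (f x)) ∧ f u = v ∧
        ∀ w, f w = w → degN T w ≤ 1 := by
  intro n
  induction n using Nat.strong_induction_on with
  | _ n ih =>
    intro V _ T hn hT u v huv
    classical
    have hne : u ≠ v := huv.ne
    have hcard2 : 2 ≤ Fintype.card V := by
      have : ({u, v} : Finset V).card ≤ Fintype.card V := by
        simpa using Finset.card_le_card (Finset.subset_univ ({u, v} : Finset V))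
      rwa [Finset.card_pair hne] at this
    by_cases hsmall : Fintype.card V < 3
    · -- base case : exactly two vertices
      have hvu : ∀ x : V, x = u ∨ x = v := by
        intro x
        have huniv : ({u, v} : Finset V) = Finset.univ := by
          apply Finset.eq_univ_of_card
          rw [Finset.card_pair hne]
          omega
        have : x ∈ ({u, v} : Finset V) := huniv ▸ Finset.mem_univ x
        simpa using this
      refine ⟨fun x => if x = u then v else u, ?_, ?_, by simp, ?_⟩
      · intro x
        by_cases hx : x = u
        · simp [hx, hne.symm]
        · rcases hvu x with h | h
          · exact absurd h hx
          · simp [hx, h]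
      · intro x hx
        by_cases h : x = u
        · subst h; simpa using huv
        · rcases hvu x with h' | h'
          · exact absurd h' h
          · subst h'; simpa [h] using huv.symm
      · intro w hw
        by_cases h : w = u
        · subst h; simp [hne.symm] at hw
        · simp [h] at hw
          exact absurd hw.symm h
    · -- inductive step: find a leaf outside {u, v} and delete it
      push_neg at hsmall
      obtain ⟨ℓ, hℓ1, hℓu, hℓv⟩ := exists_leaf_outside hT hsmall huv
      obtain ⟨p, hp⟩ : ∃ p, T.Adj ℓ p := by
        have h0 : (T.neighborSet ℓ).ncard = 1 := hℓ1
        have : (T.neighborSet ℓ).Nonempty := by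
          rw [← Set.ncard_pos (Set.toFinite _)]
          omega
        exact this.imp (fun _ h => h)
      have hn' : T.neighborSet ℓ = {p} := neighborSet_singleton_of_degN_one hℓ1 hp
      have hpl : p ≠ ℓ := hp.ne'
      set T' := T.comap (Subtype.val : {x : V // x ≠ ℓ} → V) with hT'def
      have hT' : T'.IsTree := comap_isTree hT hℓ1 hp
      have hcard' : Fintype.card {x : V // x ≠ ℓ} = n - 1 := by
        have h1 : Fintype.card {x : V // x ≠ ℓ}
            = Fintype.card V - Fintype.card {x : V // x = ℓ} :=
          Fintype.card_subtype_compl (fun x => x = ℓ)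
        rw [h1, Fintype.card_subtype_eq, hn]
      have hadj' : T'.Adj ⟨u, hℓu.symm⟩ ⟨v, hℓv.symm⟩ := huv
      obtain ⟨f', hf'inv, hf'adj, hf'uv, hf'cov⟩ :=
        ih (n - 1) (by omega) T' hcard' hT' hadj'
      set p' : {x : V // x ≠ ℓ} := ⟨p, hpl⟩ with hp'def
      -- define the extension
      set f : V → V := fun x =>
        if hx : x = ℓ then (if f' p' = p' then p else ℓ)
        else if ⟨x, hx⟩ = p' ∧ f' p' = p' then ℓ
        else (f' ⟨x, hx⟩).1 with hfdef
      have hfℓ : f ℓ = if f' p' = p' then p else ℓ := by simp [hfdef]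
      have hfx : ∀ (x : V) (hx : x ≠ ℓ), ¬ (⟨x, hx⟩ = p' ∧ f' p' = p') →
          f x = (f' ⟨x, hx⟩).1 := by
        intro x hx h
        simp only [hfdef, dif_neg hx, if_neg h]
      have hfp : f' p' = p' → f p = ℓ := by
        intro hS
        simp only [hfdef]
        split_ifs with h1 h2
        · exact absurd h1 hpl
        · rfl
        · exact (h2 ⟨rfl, hS⟩).elim
      refine ⟨f, ?_, ?_, ?_, ?_⟩
      · -- involutive
        intro x
        by_cases hx : x = ℓ
        · subst hx
          by_cases hS : f' p' = p'
          · rw [hfℓ, if_pos hS, hfp hS]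
          · rw [hfℓ, if_neg hS, hfℓ, if_neg hS]
        · by_cases hxp : (⟨x, hx⟩ : {x : V // x ≠ ℓ}) = p' ∧ f' p' = p'
          · have hx1 : f x = ℓ := by simp only [hfdef, dif_neg hx, if_pos hxp]
            rw [hx1, hfℓ, if_pos hxp.2]
            exact (congrArg Subtype.val hxp.1).symm
          · rw [hfx x hx hxp]
            set y := (f' ⟨x, hx⟩).1 with hydef
            have hyℓ : y ≠ ℓ := (f' ⟨x, hx⟩).2
            have hy' : (⟨y, hyℓ⟩ : {x : V // x ≠ ℓ}) = f' ⟨x, hx⟩ := by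
              apply Subtype.ext; rfl
            by_cases hyp : (⟨y, hyℓ⟩ : {x : V // x ≠ ℓ}) = p' ∧ f' p' = p'
            · exfalso
              have h1 : f' ⟨x, hx⟩ = p' := hy' ▸ hyp.1
              have h2 : (⟨x, hx⟩ : {x : V // x ≠ ℓ}) = f' p' := by
                rw [← h1, hf'inv]
              rw [hyp.2] at h2
              exact hxp ⟨h2, hyp.2⟩
            · rw [hfx y hyℓ hyp, hy', hf'inv]
      · -- adjacency
        intro x hxne
        by_cases hx : x = ℓ
        · subst hx
          by_cases hS : f' p' = p'
          · rw [hfℓ, if_pos hS]; exact hp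
          · rw [hfℓ, if_neg hS] at hxne; exact absurd rfl hxne
        · by_cases hxp : (⟨x, hx⟩ : {x : V // x ≠ ℓ}) = p' ∧ f' p' = p'
          · have hx1 : f x = ℓ := by simp only [hfdef, dif_neg hx, if_pos hxp]
            rw [hx1]
            have : x = p := congrArg Subtype.val hxp.1
            subst this
            exact hp.symm
          · rw [hfx x hx hxp] at hxne ⊢
            have : f' ⟨x, hx⟩ ≠ ⟨x, hx⟩ := by
              intro h; rw [h] at hxne; exact hxne rfl
            exact hf'adj ⟨x, hx⟩ this
      · -- f u = v
        have hu : u ≠ ℓ := hℓu.symm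
        by_cases hup : (⟨u, hu⟩ : {x : V // x ≠ ℓ}) = p' ∧ f' p' = p'
        · exfalso
          have h1 : f' ⟨u, hu⟩ = ⟨u, hu⟩ := by rw [hup.1, hup.2, ← hup.1]
          rw [hf'uv] at h1
          exact hne (congrArg Subtype.val h1).symm
        · rw [hfx u hu hup, hf'uv]
      · -- coverage
        intro w hw
        by_cases hwℓ : w = ℓ
        · subst hwℓ; omega
        · by_cases hwp : (⟨w, hwℓ⟩ : {x : V // x ≠ ℓ}) = p' ∧ f' p' = p'
          · exfalso
            have h1 : f w = ℓ := by simp only [hfdef, dif_neg hwℓ, if_pos hwp]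
            rw [hw] at h1
            exact hwℓ h1
          · rw [hfx w hwℓ hwp] at hw
            have hfix : f' ⟨w, hwℓ⟩ = ⟨w, hwℓ⟩ := Subtype.ext hw
            have hcov := hf'cov _ hfix
            have hwnp : w ≠ p := by
              intro h
              apply hwp
              refine ⟨Subtype.ext h, ?_⟩
              have : (⟨w, hwℓ⟩ : {x : V // x ≠ ℓ}) = p' := Subtype.ext h
              rw [← this]; exact hfix
            have hnadj : ¬ T.Adj w ℓ := by
              intro h
              have : w ∈ T.neighborSet ℓ := h.symm
              rw [hn'] at this
              exact hwnp this
            rw [← degN_comap_eq hwℓ hnadj]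
            exact hcov

end TreeMatching

section TreeMatching2

universe u

/-- Variant: a matching covering every vertex of degree ≥ 2 but avoiding a given leaf. -/
lemma tree_matching_avoiding_leaf {V : Type u} [Fintype V] (T : SimpleGraph V)
    (hT : T.IsTree) {u : V} (hu : degN T u = 1) :
    ∃ f : V → V, Function.Involutive f ∧ (∀ x, f x ≠ x → T.Adj x (f x)) ∧ f u = u ∧
      ∀ w, f w = w ∧ w ≠ u → degN T w ≤ 1 := by
  classical
  obtain ⟨v, hv⟩ : ∃ v, T.Adj u v := by
    have h0 : (T.neighborSet u).ncard = 1 := hu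
    have : (T.neighborSet u).Nonempty := by
      rw [← Set.ncard_pos (Set.toFinite _)]; omega
    exact this.imp (fun _ h => h)
  have hnu : T.neighborSet u = {v} := neighborSet_singleton_of_degN_one hu hv
  by_cases hw : ∃ w, T.Adj v w ∧ w ≠ u
  · obtain ⟨w, hvw, hwu⟩ := hw
    obtain ⟨f, hinv, hadj, hfvw, hcov⟩ :=
      tree_matching_through_edge (Fintype.card V) T rfl hT hvw
    refine ⟨f, hinv, hadj, ?_, fun x hx => hcov x hx.1⟩
    by_contra hfu
    have h1 : T.Adj u (f u) := hadj u hfu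
    have h2 : f u ∈ T.neighborSet u := h1
    rw [hnu] at h2
    have h3 : f u = v := h2
    have h4 : f v = u := by rw [← h3, hinv]
    rw [hfvw] at h4
    exact hwu h4
  · push_neg at hw
    have hnv : T.neighborSet v = {u} := by
      ext x
      simp only [SimpleGraph.mem_neighborSet, Set.mem_singleton_iff]
      constructor
      · intro h
        by_contra hxu
        exact hxu (hw x h)
      · rintro rfl; exact hv.symm
    refine ⟨id, fun x => rfl, fun x hx => absurd rfl hx, rfl, ?_⟩
    rintro x ⟨-, hxu⟩
    have hx2 : x ∈ ({u, v} : Set V) := by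
      obtain ⟨wk⟩ := hT.isConnected.preconnected u x
      exact walk_confined hnu hnv wk (by simp)
    rcases hx2 with h | h
    · exact absurd h hxu
    · subst h
      have : degN T x = 1 := by
        show (T.neighborSet x).ncard = 1
        rw [hnv]; simp
      omega

/-- Every finite tree is 2-colorable. -/
lemma tree_colorable :
    ∀ (n : ℕ), ∀ {V : Type u} [Fintype V] (T : SimpleGraph V), Fintype.card V = n →
      T.IsTree → T.Colorable 2 := by
  intro n
  induction n using Nat.strong_induction_on with
  | _ n ih =>
    intro V _ T hn hT
    classical
    by_cases hsmall : Fintype.card V ≤ 1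
    · haveI : Subsingleton V := Fintype.card_le_one_iff_subsingleton.mp hsmall
      exact ⟨SimpleGraph.Coloring.mk (fun _ => 0)
        (fun {a b} hab => absurd (Subsingleton.elim a b) hab.ne)⟩
    · push_neg at hsmall
      obtain ⟨ℓ, hℓ⟩ := exists_leaf hT hsmall
      obtain ⟨p, hp⟩ : ∃ p, T.Adj ℓ p := by
        have h0 : (T.neighborSet ℓ).ncard = 1 := hℓ
        have : (T.neighborSet ℓ).Nonempty := by
          rw [← Set.ncard_pos (Set.toFinite _)]; omega
        exact this.imp (fun _ h => h)
      have hnl : T.neighborSet ℓ = {p} := neighborSet_singleton_of_degN_one hℓ hp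
      have hpl : p ≠ ℓ := hp.ne'
      have hT' := comap_isTree hT hℓ hp
      have hcard' : Fintype.card {x : V // x ≠ ℓ} = n - 1 := by
        have h1 : Fintype.card {x : V // x ≠ ℓ}
            = Fintype.card V - Fintype.card {x : V // x = ℓ} :=
          Fintype.card_subtype_compl (fun x => x = ℓ)
        rw [h1, Fintype.card_subtype_eq, hn]
      obtain ⟨C⟩ := ih (n - 1) (by omega) _ hcard' hT'
      have haux : ∀ x : Fin 2, 1 - x ≠ x := by decide
      refine ⟨SimpleGraph.Coloring.mk
        (fun x => if hx : x = ℓ then 1 - C ⟨p, hpl⟩ else C ⟨x, hx⟩) ?_⟩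
      intro a b hab
      by_cases ha : a = ℓ
      · subst ha
        have hb : b = p := by
          have : b ∈ T.neighborSet a := hab
          rwa [hnl, Set.mem_singleton_iff] at this
        subst hb
        simp only [dif_pos rfl, dif_neg hpl]
        exact haux _
      · by_cases hb : b = ℓ
        · subst hb
          have ha2 : a = p := by
            have : a ∈ T.neighborSet b := hab.symm
            rwa [hnl, Set.mem_singleton_iff] at this
          subst ha2
          simp only [dif_neg hpl, dif_pos rfl]
          exact (haux _).symm
        · simp only [dif_neg ha, dif_neg hb]
          have : (T.comap (Subtype.val : {x : V // x ≠ ℓ} → V)).Adj ⟨a, ha⟩ ⟨b, hb⟩ := hab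
          exact C.valid this

end TreeMatching2

section PMTools
variable {W : Type*} {G : SimpleGraph W}

/-- The perfect matching associated to a fixed-point-free involution along edges. -/
def invMatching (G : SimpleGraph W) (f : W → W) (hinv : Function.Involutive f)
    (hadj : ∀ x, G.Adj x (f x)) : G.Subgraph where
  verts := Set.univ
  Adj x y := G.Adj x y ∧ f x = y
  adj_sub h := h.1
  edge_vert _ := trivial
  symm := by refine ⟨?_⟩; rintro x y ⟨h1, h2⟩; exact ⟨h1.symm, by rw [← h2, hinv]⟩

lemma invMatching_isPM (f : W → W) (hinv : Function.Involutive f)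
    (hadj : ∀ x, G.Adj x (f x)) : (invMatching G f hinv hadj).IsPerfectMatching := by
  constructor
  · intro v _
    exact ⟨f v, ⟨hadj v, rfl⟩, fun y hy => hy.2.symm⟩
  · intro v; trivial

lemma invMatching_mem_edgeSet (f : W → W) (hinv : Function.Involutive f)
    (hadj : ∀ x, G.Adj x (f x)) {x y : W} (h : f x = y) (hxy : G.Adj x y) :
    s(x, y) ∈ (invMatching G f hinv hadj).edgeSet := by
  rw [SimpleGraph.Subgraph.mem_edgeSet]
  exact ⟨hxy, h⟩

/-- Extract a matching function from a perfect matching. -/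
lemma exists_pm_fun {M : G.Subgraph} (h : M.IsPerfectMatching) :
    ∃ F : W → W, Function.Involutive F ∧ (∀ v, M.Adj v (F v)) ∧
      (∀ v w, M.Adj v w → F v = w) ∧ (∀ v, F v ≠ v) := by
  have h' := SimpleGraph.Subgraph.isPerfectMatching_iff.mp h
  choose F h1 h2 using h'
  have huniq : ∀ v w, M.Adj v w → F v = w := fun v w hw => (h2 v w hw).symm
  have hinv : Function.Involutive F := fun v => huniq (F v) v (h1 v).symm
  exact ⟨F, hinv, h1, huniq, fun v hv => ((hv ▸ (h1 v)).ne rfl : False).elim⟩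

end PMTools

section Parity
variable {α : Type*} [DecidableEq α]

lemma even_card_invariant (f : α → α) (hinv : Function.Involutive f)
    (hnf : ∀ x, f x ≠ x) :
    ∀ s : Finset α, (∀ x ∈ s, f x ∈ s) → Even s.card := by
  intro s
  induction s using Finset.strongInductionOn with
  | _ s ih =>
    intro hs
    rcases s.eq_empty_or_nonempty with rfl | ⟨a, ha⟩
    · simp
    · have hfa : f a ∈ s := hs a ha
      have hne : f a ≠ a := hnf a
      have hsub : ({a, f a} : Finset α) ⊆ s := by
        intro x hx
        simp only [Finset.mem_insert, Finset.mem_singleton] at hx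
        rcases hx with rfl | rfl
        exacts [ha, hfa]
      have hts : s \ {a, f a} ⊂ s :=
        Finset.sdiff_ssubset hsub (by simp)
      have hclosed : ∀ x ∈ s \ {a, f a}, f x ∈ s \ {a, f a} := by
        intro x hx
        rw [Finset.mem_sdiff] at hx ⊢
        refine ⟨hs x hx.1, ?_⟩
        have hx2 := hx.2
        simp only [Finset.mem_insert, Finset.mem_singleton] at hx2 ⊢
        push_neg at hx2 ⊢
        constructor
        · intro h
          exact hx2.2 ((hinv x).symm.trans (congrArg f h))
        · intro h
          exact hx2.1 (hinv.injective h)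
      have hcard : s.card = (s \ {a, f a}).card + 2 := by
        rw [Finset.card_sdiff_of_subset hsub, Finset.card_pair (Ne.symm hne)]
        have : 2 ≤ s.card := by
          calc 2 = ({a, f a} : Finset α).card := (Finset.card_pair (Ne.symm hne)).symm
            _ ≤ s.card := Finset.card_le_card hsub
        omega
      obtain ⟨k, hk⟩ := ih _ hts hclosed
      exact ⟨k + 1, by omega⟩

lemma parity_crossing (F : α → α) (hinv : Function.Involutive F)
    (hnf : ∀ x, F x ≠ x) (X : Finset α) :
    (X.filter (fun x => F x ∉ X)).card % 2 = X.card % 2 := by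
  classical
  have hsplit : X.filter (fun x => F x ∈ X) ∪ X.filter (fun x => F x ∉ X) = X := by
    rw [Finset.filter_union_filter_not_eq]
  have hdisj : Disjoint (X.filter (fun x => F x ∈ X)) (X.filter (fun x => F x ∉ X)) :=
    Finset.disjoint_filter_filter_not X X _
  have hcard : (X.filter (fun x => F x ∈ X)).card + (X.filter (fun x => F x ∉ X)).card
      = X.card := by
    rw [← Finset.card_union_of_disjoint hdisj, hsplit]
  have heven : Even ((X.filter (fun x => F x ∈ X)).card) := by
    apply even_card_invariant F hinv hnf
    intro x hx
    simp only [Finset.mem_filter] at hx ⊢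
    exact ⟨hx.2, by rw [hinv]; exact hx.1⟩
  obtain ⟨k, hk⟩ := heven
  omega

end Parity

section LM
variable {V : Type*} [Fintype V] {T : SimpleGraph V}

lemma lm_adj_ll {a b : V} : (leafMatching T).Adj (Sum.inl a) (Sum.inl b) ↔ T.Adj a b := Iff.rfl

lemma lm_adj_rr {a b : V} : (leafMatching T).Adj (Sum.inr a) (Sum.inr b) ↔ T.Adj a b := Iff.rfl

lemma lm_adj_lr {a b : V} :
    (leafMatching T).Adj (Sum.inl a) (Sum.inr b) ↔ a = b ∧ degN T a = 1 := Iff.rfl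

lemma lm_adj_rl {a b : V} :
    (leafMatching T).Adj (Sum.inr a) (Sum.inl b) ↔ a = b ∧ degN T b = 1 := Iff.rfl

lemma lm_nbhd_inl_leaf {w : V} (hw : degN T w = 1) :
    (leafMatching T).neighborSet (Sum.inl w)
      = Sum.inl '' (T.neighborSet w) ∪ {Sum.inr w} := by
  ext y
  cases y with
  | inl b =>
    simp only [SimpleGraph.mem_neighborSet, Set.mem_union, Set.mem_image,
      Set.mem_singleton_iff, lm_adj_ll]
    constructor
    · intro h; exact Or.inl ⟨b, h, rfl⟩
    · rintro (⟨b', hb', h⟩ | h)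
      · cases h; exact hb'
      · exact absurd h (by simp)
  | inr b =>
    simp only [SimpleGraph.mem_neighborSet, Set.mem_union, Set.mem_image,
      Set.mem_singleton_iff, lm_adj_lr]
    constructor
    · rintro ⟨rfl, _⟩; right; rfl
    · rintro (⟨b', _, h⟩ | h)
      · exact absurd h (by simp)
      · cases h; exact ⟨rfl, hw⟩

lemma lm_nbhd_inl_nonleaf {w : V} (hw : degN T w ≠ 1) :
    (leafMatching T).neighborSet (Sum.inl w) = Sum.inl '' (T.neighborSet w) := by
  ext y
  cases y with
  | inl b =>
    simp only [SimpleGraph.mem_neighborSet, Set.mem_image, lm_adj_ll]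
    constructor
    · intro h; exact ⟨b, h, rfl⟩
    · rintro ⟨b', hb', h⟩; cases h; exact hb'
  | inr b =>
    simp only [SimpleGraph.mem_neighborSet, Set.mem_image, lm_adj_lr]
    constructor
    · rintro ⟨rfl, h⟩; exact absurd h hw
    · rintro ⟨b', _, h⟩; exact absurd h (by simp)

lemma lm_nbhd_inr_leaf {w : V} (hw : degN T w = 1) :
    (leafMatching T).neighborSet (Sum.inr w)
      = Sum.inr '' (T.neighborSet w) ∪ {Sum.inl w} := by
  ext y
  cases y with
  | inr b =>
    simp only [SimpleGraph.mem_neighborSet, Set.mem_union, Set.mem_image,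
      Set.mem_singleton_iff, lm_adj_rr]
    constructor
    · intro h; exact Or.inl ⟨b, h, rfl⟩
    · rintro (⟨b', hb', h⟩ | h)
      · cases h; exact hb'
      · exact absurd h (by simp)
  | inl b =>
    simp only [SimpleGraph.mem_neighborSet, Set.mem_union, Set.mem_image,
      Set.mem_singleton_iff, lm_adj_rl]
    constructor
    · rintro ⟨rfl, _⟩; right; rfl
    · rintro (⟨b', _, h⟩ | h)
      · exact absurd h (by simp)
      · cases h; exact ⟨rfl, hw⟩

lemma lm_nbhd_inr_nonleaf {w : V} (hw : degN T w ≠ 1) :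
    (leafMatching T).neighborSet (Sum.inr w) = Sum.inr '' (T.neighborSet w) := by
  ext y
  cases y with
  | inr b =>
    simp only [SimpleGraph.mem_neighborSet, Set.mem_image, lm_adj_rr]
    constructor
    · intro h; exact ⟨b, h, rfl⟩
    · rintro ⟨b', hb', h⟩; cases h; exact hb'
  | inl b =>
    simp only [SimpleGraph.mem_neighborSet, Set.mem_image, lm_adj_rl]
    constructor
    · rintro ⟨rfl, h⟩; exact absurd h hw
    · rintro ⟨b', _, h⟩; exact absurd h (by simp)

lemma degN_lm_inl (w : V) :
    degN (leafMatching T) (Sum.inl w) = if degN T w = 1 then 2 else degN T w := by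
  by_cases hw : degN T w = 1
  · rw [if_pos hw]
    unfold degN
    rw [lm_nbhd_inl_leaf hw, Set.ncard_union_eq (by simp) (Set.toFinite _) (Set.toFinite _),
      Set.ncard_image_of_injective _ Sum.inl_injective, Set.ncard_singleton]
    have : (T.neighborSet w).ncard = 1 := hw
    omega
  · rw [if_neg hw]
    unfold degN
    rw [lm_nbhd_inl_nonleaf hw, Set.ncard_image_of_injective _ Sum.inl_injective]

lemma degN_lm_inr (w : V) :
    degN (leafMatching T) (Sum.inr w) = if degN T w = 1 then 2 else degN T w := by
  by_cases hw : degN T w = 1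
  · rw [if_pos hw]
    unfold degN
    rw [lm_nbhd_inr_leaf hw, Set.ncard_union_eq (by simp) (Set.toFinite _) (Set.toFinite _),
      Set.ncard_image_of_injective _ Sum.inr_injective, Set.ncard_singleton]
    have : (T.neighborSet w).ncard = 1 := hw
    omega
  · rw [if_neg hw]
    unfold degN
    rw [lm_nbhd_inr_nonleaf hw, Set.ncard_image_of_injective _ Sum.inr_injective]

/-- The two inclusion homomorphisms. -/
def lmInl (T : SimpleGraph V) : T →g leafMatching T := ⟨Sum.inl, fun h => h⟩

def lmInr (T : SimpleGraph V) : T →g leafMatching T := ⟨Sum.inr, fun h => h⟩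

lemma lm_connected (hT : T.IsTree) (hcard : 2 ≤ Fintype.card V) :
    (leafMatching T).Connected := by
  obtain ⟨ℓ, hℓ⟩ := exists_leaf hT hcard
  have hbridge : (leafMatching T).Adj (Sum.inl ℓ) (Sum.inr ℓ) := ⟨rfl, hℓ⟩
  haveI : Nonempty V := ⟨ℓ⟩
  constructor
  intro x y
  have hl : ∀ a : V, (leafMatching T).Reachable (Sum.inl a) (Sum.inl ℓ) := by
    intro a
    exact (hT.isConnected.preconnected a ℓ).map (lmInl T)
  have hr : ∀ a : V, (leafMatching T).Reachable (Sum.inr a) (Sum.inr ℓ) := by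
    intro a
    exact (hT.isConnected.preconnected a ℓ).map (lmInr T)
  cases x with
  | inl a =>
    cases y with
    | inl b => exact ((hl a).trans (hl b).symm)
    | inr b => exact ((hl a).trans hbridge.reachable).trans (hr b).symm
  | inr a =>
    cases y with
    | inl b => exact (((hr a).trans hbridge.reachable.symm)).trans (hl b).symm
    | inr b => exact (hr a).trans (hr b).symm

end LM

section LM2
variable {V : Type*} [Fintype V] {T : SimpleGraph V}

open scoped Classical in
/-- Extend a matching-involution on `T` to one on `leafMatching T`. -/
noncomputable def lmExt (f : V → V) : V ⊕ V → V ⊕ V :=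
  Sum.elim (fun w => if f w = w then Sum.inr w else Sum.inl (f w))
           (fun w => if f w = w then Sum.inl w else Sum.inr (f w))

variable {f : V → V}

lemma lmExt_involutive (hinv : Function.Involutive f) : Function.Involutive (lmExt f) := by
  intro x
  cases x with
  | inl w =>
    by_cases hw : f w = w
    · simp [lmExt, hw]
    · have h2 : f (f w) = w := hinv w
      have h3 : ¬ f (f w) = f w := by rw [h2]; exact fun h => hw h.symm
      simp only [lmExt, Sum.elim_inl, Sum.elim_inr, if_neg hw, if_neg h3, h2]
  | inr w =>
    by_cases hw : f w = w
    · simp [lmExt, hw]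
    · have h2 : f (f w) = w := hinv w
      have h3 : ¬ f (f w) = f w := by rw [h2]; exact fun h => hw h.symm
      simp only [lmExt, Sum.elim_inl, Sum.elim_inr, if_neg hw, if_neg h3, h2]

lemma lmExt_adj (hdeg : ∀ v, degN T v = 1 ∨ degN T v = 3)
    (hadjf : ∀ x, f x ≠ x → T.Adj x (f x)) (hcov : ∀ w, f w = w → degN T w ≤ 1) :
    ∀ x, (leafMatching T).Adj x (lmExt f x) := by
  have hleaf : ∀ w, f w = w → degN T w = 1 := by
    intro w hw
    have := hcov w hw
    rcases hdeg w with h | h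
    · exact h
    · omega
  intro x
  cases x with
  | inl w =>
    by_cases hw : f w = w
    · simp only [lmExt, Sum.elim_inl, if_pos hw]
      exact ⟨rfl, hleaf w hw⟩
    · simp only [lmExt, Sum.elim_inl, if_neg hw]
      exact hadjf w hw
  | inr w =>
    by_cases hw : f w = w
    · simp only [lmExt, Sum.elim_inr, if_pos hw]
      exact ⟨rfl, hleaf w hw⟩
    · simp only [lmExt, Sum.elim_inr, if_neg hw]
      exact hadjf w hw

lemma lm_matchingCovered (hT : T.IsTree) (hcard : 2 ≤ Fintype.card V)
    (hdeg : ∀ v, degN T v = 1 ∨ degN T v = 3) :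
    MatchingCovered (leafMatching T) := by
  refine ⟨lm_connected hT hcard, ?_, ?_⟩
  · rw [Fintype.card_sum]; omega
  · intro e he
    induction e using Sym2.ind with
    | _ x y =>
      rw [SimpleGraph.mem_edgeSet] at he
      cases x with
      | inl a =>
        cases y with
        | inl b =>
          have hab : T.Adj a b := he
          obtain ⟨f, hinv, hadjf, hfab, hcov⟩ :=
            tree_matching_through_edge (Fintype.card V) T rfl hT hab
          refine ⟨invMatching _ (lmExt f) (lmExt_involutive hinv) (lmExt_adj hdeg hadjf hcov),
            invMatching_isPM _ _ _, ?_⟩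
          apply invMatching_mem_edgeSet
          · simp only [lmExt, Sum.elim_inl]
            rw [if_neg (by rw [hfab]; exact hab.symm.ne), hfab]
          · exact he
        | inr b =>
          obtain ⟨rfl, hda⟩ := he
          obtain ⟨f, hinv, hadjf, hfaa, hcov⟩ := tree_matching_avoiding_leaf T hT hda
          have hcov' : ∀ w, f w = w → degN T w ≤ 1 := by
            intro w hw
            by_cases hwa : w = a
            · subst hwa; omega
            · exact hcov w ⟨hw, hwa⟩
          refine ⟨invMatching _ (lmExt f) (lmExt_involutive hinv) (lmExt_adj hdeg hadjf hcov'),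
            invMatching_isPM _ _ _, ?_⟩
          apply invMatching_mem_edgeSet
          · simp only [lmExt, Sum.elim_inl, if_pos hfaa]
          · exact ⟨rfl, hda⟩
      | inr a =>
        cases y with
        | inl b =>
          obtain ⟨rfl, hda⟩ := he
          obtain ⟨f, hinv, hadjf, hfaa, hcov⟩ := tree_matching_avoiding_leaf T hT hda
          have hcov' : ∀ w, f w = w → degN T w ≤ 1 := by
            intro w hw
            by_cases hwa : w = a
            · subst hwa; omega
            · exact hcov w ⟨hw, hwa⟩
          refine ⟨invMatching _ (lmExt f) (lmExt_involutive hinv) (lmExt_adj hdeg hadjf hcov'),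
            invMatching_isPM _ _ _, ?_⟩
          rw [Sym2.eq_swap]
          apply invMatching_mem_edgeSet
          · simp only [lmExt, Sum.elim_inl, if_pos hfaa]
          · exact ⟨rfl, hda⟩
        | inr b =>
          have hab : T.Adj a b := he
          obtain ⟨f, hinv, hadjf, hfab, hcov⟩ :=
            tree_matching_through_edge (Fintype.card V) T rfl hT hab
          refine ⟨invMatching _ (lmExt f) (lmExt_involutive hinv) (lmExt_adj hdeg hadjf hcov),
            invMatching_isPM _ _ _, ?_⟩
          apply invMatching_mem_edgeSet
          · simp only [lmExt, Sum.elim_inr]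
            rw [if_neg (by rw [hfab]; exact hab.symm.ne), hfab]
          · exact he

end LM2

section Parity2
variable {V : Type*} [Fintype V] {T : SimpleGraph V}

lemma lm_parity (hT : T.IsTree) {u v : V} (huv : T.Adj u v)
    {M : (leafMatching T).Subgraph} (hM : M.IsPerfectMatching) :
    (s(Sum.inl u, Sum.inl v) ∈ M.edgeSet ↔ s(Sum.inr u, Sum.inr v) ∈ M.edgeSet) := by
  classical
  obtain ⟨F, hFinv, hFadj, hFuniq, hFne⟩ := exists_pm_fun hM
  have hGadj : ∀ x, (leafMatching T).Adj x (F x) := fun x => M.adj_sub (hFadj x)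
  set T' := T.deleteEdges {s(u, v)} with hT'def
  set W : Set V := {x | T'.Reachable u x} with hWdef
  have hWu : u ∈ W := Set.mem_setOf.mpr (Reachable.refl u)
  have hWv : v ∉ W := by
    intro hv
    obtain ⟨wk⟩ := hv
    have hsub : ∀ e ∈ (wk.toPath.1).edges, e ∈ T.edgeSet := fun e he' =>
      (SimpleGraph.edgeSet_mono (SimpleGraph.deleteEdges_le _))
        ((wk.toPath.1).edges_subset_edgeSet he')
    have hq : ((wk.toPath.1).transfer T hsub).IsPath := wk.toPath.2.transfer _
    have hq2 : (SimpleGraph.Walk.cons huv SimpleGraph.Walk.nil).IsPath := by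
      simp [SimpleGraph.Walk.cons_isPath_iff, huv.ne]
    have hequ := (hT.existsUnique_path u v).unique hq hq2
    have hmem : s(u, v) ∈ (wk.toPath.1).edges := by
      rw [← SimpleGraph.Walk.edges_transfer _ hsub, hequ]
      simp
    have hmem2 : s(u, v) ∈ T'.edgeSet := (wk.toPath.1).edges_subset_edgeSet hmem
    rw [SimpleGraph.mem_edgeSet, hT'def, SimpleGraph.deleteEdges_adj] at hmem2
    simp at hmem2
  have hWclosed : ∀ x ∈ W, ∀ y, T'.Adj x y → y ∈ W := by
    intro x hx y hxy
    exact Set.mem_setOf.mpr ((Set.mem_setOf.mp hx).trans hxy.reachable)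
  have hcross : ∀ x ∈ W, ∀ y, y ∉ W → T.Adj x y → x = u ∧ y = v := by
    intro x hx y hy hxy
    by_cases he : s(x, y) = s(u, v)
    · rw [Sym2.eq_iff] at he
      rcases he with ⟨rfl, rfl⟩ | ⟨rfl, rfl⟩
      · exact ⟨rfl, rfl⟩
      · exact absurd hx hWv
    · have : T'.Adj x y := by
        rw [hT'def, SimpleGraph.deleteEdges_adj]
        exact ⟨hxy, by simpa using he⟩
      exact absurd (hWclosed x hx y this) hy
  set Wf : Finset V := W.toFinset with hWf
  set A : Finset V := Wf.filter (fun w => F (Sum.inl w) = Sum.inr w) with hA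
  set B : Finset V := Wf.filter (fun w => F (Sum.inr w) = Sum.inl w) with hB
  have hAB : A = B := by
    apply Finset.filter_congr
    intro w _
    constructor
    · intro h
      rw [← h]; exact hFinv _
    · intro h
      rw [← h]; exact hFinv _
  set Xl : Finset (V ⊕ V) := Wf.image Sum.inl with hXl
  set Xr : Finset (V ⊕ V) := Wf.image Sum.inr with hXr
  -- description of the crossing set on the left
  have hmeml : ∀ x, x ∈ Xl.filter (fun x => F x ∉ Xl) ↔
      (∃ w ∈ A, x = Sum.inl w) ∨ (x = Sum.inl u ∧ F (Sum.inl u) = Sum.inl v) := by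
    intro x
    rw [Finset.mem_filter]
    constructor
    · rintro ⟨hx, hFx⟩
      obtain ⟨w, hwW, rfl⟩ := Finset.mem_image.mp hx
      cases hFw : F (Sum.inl w) with
      | inl w' =>
        have hadj : T.Adj w w' := by
          have h0 := hGadj (Sum.inl w); rw [hFw] at h0; exact h0
        have hw' : w' ∉ W := by
          intro hmem'
          apply hFx; rw [hFw]
          exact Finset.mem_image_of_mem _ (Set.mem_toFinset.mpr hmem')
        obtain ⟨rfl, rfl⟩ := hcross w (Set.mem_toFinset.mp hwW) w' hw' hadj
        right; exact ⟨rfl, hFw⟩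
      | inr w' =>
        have hadj := hGadj (Sum.inl w); rw [hFw] at hadj
        left
        refine ⟨w, Finset.mem_filter.mpr ⟨hwW, ?_⟩, rfl⟩
        rw [hFw, hadj.1]
    · rintro (⟨w, hwA, rfl⟩ | ⟨rfl, hF⟩)
      · have hwA' := Finset.mem_filter.mp hwA
        refine ⟨Finset.mem_image_of_mem _ hwA'.1, ?_⟩
        rw [hwA'.2]
        intro hmem'
        obtain ⟨w2, _, hw2⟩ := Finset.mem_image.mp hmem'
        exact Sum.inl_ne_inr hw2
      · refine ⟨Finset.mem_image_of_mem _ (Set.mem_toFinset.mpr hWu), ?_⟩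
        rw [hF]
        intro hmem'
        obtain ⟨w2, hw2W, hw2⟩ := Finset.mem_image.mp hmem'
        rw [Sum.inl.injEq] at hw2
        subst hw2
        exact hWv (Set.mem_toFinset.mp hw2W)
  have hmemr : ∀ x, x ∈ Xr.filter (fun x => F x ∉ Xr) ↔
      (∃ w ∈ B, x = Sum.inr w) ∨ (x = Sum.inr u ∧ F (Sum.inr u) = Sum.inr v) := by
    intro x
    rw [Finset.mem_filter]
    constructor
    · rintro ⟨hx, hFx⟩
      obtain ⟨w, hwW, rfl⟩ := Finset.mem_image.mp hx
      cases hFw : F (Sum.inr w) with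
      | inr w' =>
        have hadj : T.Adj w w' := by
          have h0 := hGadj (Sum.inr w); rw [hFw] at h0; exact h0
        have hw' : w' ∉ W := by
          intro hmem'
          apply hFx; rw [hFw]
          exact Finset.mem_image_of_mem _ (Set.mem_toFinset.mpr hmem')
        obtain ⟨rfl, rfl⟩ := hcross w (Set.mem_toFinset.mp hwW) w' hw' hadj
        right; exact ⟨rfl, hFw⟩
      | inl w' =>
        have hadj := hGadj (Sum.inr w); rw [hFw] at hadj
        left
        refine ⟨w, Finset.mem_filter.mpr ⟨hwW, ?_⟩, rfl⟩
        rw [hFw, hadj.1]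
    · rintro (⟨w, hwB, rfl⟩ | ⟨rfl, hF⟩)
      · have hwB' := Finset.mem_filter.mp hwB
        refine ⟨Finset.mem_image_of_mem _ hwB'.1, ?_⟩
        rw [hwB'.2]
        intro hmem'
        obtain ⟨w2, _, hw2⟩ := Finset.mem_image.mp hmem'
        exact Sum.inl_ne_inr hw2.symm
      · refine ⟨Finset.mem_image_of_mem _ (Set.mem_toFinset.mpr hWu), ?_⟩
        rw [hF]
        intro hmem'
        obtain ⟨w2, hw2W, hw2⟩ := Finset.mem_image.mp hmem'
        rw [Sum.inr.injEq] at hw2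
        subst hw2
        exact hWv (Set.mem_toFinset.mp hw2W)
  -- cardinalities
  have hcardl : (Xl.filter (fun x => F x ∉ Xl)).card
      = A.card + (if F (Sum.inl u) = Sum.inl v then 1 else 0) := by
    by_cases hc : F (Sum.inl u) = Sum.inl v
    · rw [if_pos hc]
      have heq : Xl.filter (fun x => F x ∉ Xl) = insert (Sum.inl u) (A.image Sum.inl) := by
        ext x
        rw [hmeml x, Finset.mem_insert, Finset.mem_image]
        constructor
        · rintro (⟨w, hw, rfl⟩ | ⟨rfl, _⟩)
          · exact Or.inr ⟨w, hw, rfl⟩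
          · exact Or.inl rfl
        · rintro (rfl | ⟨w, hw, rfl⟩)
          · exact Or.inr ⟨rfl, hc⟩
          · exact Or.inl ⟨w, hw, rfl⟩
      have hnm : Sum.inl u ∉ A.image (Sum.inl : V → V ⊕ V) := by
        intro hmem'
        obtain ⟨w, hw, hw2⟩ := Finset.mem_image.mp hmem'
        rw [Sum.inl.injEq] at hw2
        subst hw2
        have := (Finset.mem_filter.mp hw).2
        rw [hc] at this
        exact Sum.inl_ne_inr this
      rw [heq, Finset.card_insert_of_notMem hnm,
        Finset.card_image_of_injective _ Sum.inl_injective]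
    · rw [if_neg hc]
      have heq : Xl.filter (fun x => F x ∉ Xl) = A.image Sum.inl := by
        ext x
        rw [hmeml x, Finset.mem_image]
        constructor
        · rintro (⟨w, hw, rfl⟩ | ⟨rfl, h⟩)
          · exact ⟨w, hw, rfl⟩
          · exact absurd h hc
        · rintro ⟨w, hw, rfl⟩
          exact Or.inl ⟨w, hw, rfl⟩
      rw [heq, Finset.card_image_of_injective _ Sum.inl_injective]
      omega
  have hcardr : (Xr.filter (fun x => F x ∉ Xr)).card
      = B.card + (if F (Sum.inr u) = Sum.inr v then 1 else 0) := by
    by_cases hc : F (Sum.inr u) = Sum.inr v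
    · rw [if_pos hc]
      have heq : Xr.filter (fun x => F x ∉ Xr) = insert (Sum.inr u) (B.image Sum.inr) := by
        ext x
        rw [hmemr x, Finset.mem_insert, Finset.mem_image]
        constructor
        · rintro (⟨w, hw, rfl⟩ | ⟨rfl, _⟩)
          · exact Or.inr ⟨w, hw, rfl⟩
          · exact Or.inl rfl
        · rintro (rfl | ⟨w, hw, rfl⟩)
          · exact Or.inr ⟨rfl, hc⟩
          · exact Or.inl ⟨w, hw, rfl⟩
      have hnm : Sum.inr u ∉ B.image (Sum.inr : V → V ⊕ V) := by
        intro hmem'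
        obtain ⟨w, hw, hw2⟩ := Finset.mem_image.mp hmem'
        rw [Sum.inr.injEq] at hw2
        subst hw2
        have := (Finset.mem_filter.mp hw).2
        rw [hc] at this
        exact Sum.inl_ne_inr this.symm
      rw [heq, Finset.card_insert_of_notMem hnm,
        Finset.card_image_of_injective _ Sum.inr_injective]
    · rw [if_neg hc]
      have heq : Xr.filter (fun x => F x ∉ Xr) = B.image Sum.inr := by
        ext x
        rw [hmemr x, Finset.mem_image]
        constructor
        · rintro (⟨w, hw, rfl⟩ | ⟨rfl, h⟩)
          · exact ⟨w, hw, rfl⟩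
          · exact absurd h hc
        · rintro ⟨w, hw, rfl⟩
          exact Or.inl ⟨w, hw, rfl⟩
      rw [heq, Finset.card_image_of_injective _ Sum.inr_injective]
      omega
  have hpl := parity_crossing F hFinv hFne Xl
  have hpr := parity_crossing F hFinv hFne Xr
  have hXlcard : Xl.card = Wf.card := Finset.card_image_of_injective _ Sum.inl_injective
  have hXrcard : Xr.card = Wf.card := Finset.card_image_of_injective _ Sum.inr_injective
  have hMl : s(Sum.inl u, Sum.inl v) ∈ M.edgeSet ↔ F (Sum.inl u) = Sum.inl v := by
    rw [SimpleGraph.Subgraph.mem_edgeSet]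
    exact ⟨fun h => hFuniq _ _ h, fun h => h ▸ hFadj _⟩
  have hMr : s(Sum.inr u, Sum.inr v) ∈ M.edgeSet ↔ F (Sum.inr u) = Sum.inr v := by
    rw [SimpleGraph.Subgraph.mem_edgeSet]
    exact ⟨fun h => hFuniq _ _ h, fun h => h ▸ hFadj _⟩
  rw [hMl, hMr]
  rw [hAB] at hcardl
  rw [hXlcard] at hpl
  rw [hXrcard] at hpr
  rw [hcardl] at hpl
  rw [hcardr] at hpr
  by_cases hc1 : F (Sum.inl u) = Sum.inl v
  · rw [if_pos hc1] at hpl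
    by_cases hc2 : F (Sum.inr u) = Sum.inr v
    · exact iff_of_true hc1 hc2
    · rw [if_neg hc2] at hpr
      exfalso; omega
  · rw [if_neg hc1] at hpl
    by_cases hc2 : F (Sum.inr u) = Sum.inr v
    · rw [if_pos hc2] at hpr
      exfalso; omega
    · exact iff_of_false hc1 hc2

end Parity2

section Minimal
variable {V : Type*} [Fintype V] {T : SimpleGraph V}

/-- A perfect matching of `G.deleteEdges s` yields one of `G` with the same edges. -/
lemma pm_transfer {W : Type*} {G : SimpleGraph W} {s : Set (Sym2 W)}
    {M : (G.deleteEdges s).Subgraph} (hM : M.IsPerfectMatching) :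
    ∃ M' : G.Subgraph, M'.IsPerfectMatching ∧ M'.edgeSet = M.edgeSet := by
  refine ⟨⟨M.verts, M.Adj, fun h => (SimpleGraph.deleteEdges_le s) (M.adj_sub h),
    fun h => M.edge_vert h, M.symm⟩, ⟨?_, ?_⟩, ?_⟩
  · intro v hv
    exact hM.1 hv
  · intro v
    exact hM.2 v
  · rfl

lemma lm_del_leaf_edge (hT : T.IsTree) {u : V} (hdu : degN T u = 1) :
    ¬ MatchingCovered ((leafMatching T).deleteEdges {s(Sum.inl u, Sum.inr u)}) := by
  classical
  rintro ⟨-, -, hpm⟩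
  obtain ⟨v0, hv0⟩ : ∃ v0, T.Adj u v0 := by
    have h0 : (T.neighborSet u).ncard = 1 := hdu
    have : (T.neighborSet u).Nonempty := by
      rw [← Set.ncard_pos (Set.toFinite _)]; omega
    exact this.imp (fun _ h => h)
  have hnb : T.neighborSet u = {v0} := neighborSet_singleton_of_degN_one hdu hv0
  -- the forcing argument
  have forced : ∀ (M : ((leafMatching T).deleteEdges {s(Sum.inl u, Sum.inr u)}).Subgraph),
      M.IsPerfectMatching → ∀ F : V ⊕ V → V ⊕ V,
      (∀ x, M.Adj x (F x)) → F (Sum.inl u) = Sum.inl v0 := by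
    intro M hM F hFadj
    have hadj := M.adj_sub (hFadj (Sum.inl u))
    rw [SimpleGraph.deleteEdges_adj] at hadj
    cases hF : F (Sum.inl u) with
    | inl w =>
      rw [hF] at hadj
      have : w ∈ T.neighborSet u := hadj.1
      rw [hnb] at this
      rw [this]
    | inr w =>
      exfalso
      rw [hF] at hadj
      have huw : u = w := hadj.1.1
      exact hadj.2 (by rw [← huw]; rfl)
  by_cases hw : ∃ w, T.Adj v0 w ∧ w ≠ u
  · obtain ⟨w, hvw, hwu⟩ := hw
    have hf : s(Sum.inl v0, Sum.inl w) ∈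
        ((leafMatching T).deleteEdges {s(Sum.inl u, Sum.inr u)}).edgeSet := by
      rw [SimpleGraph.mem_edgeSet, SimpleGraph.deleteEdges_adj]
      refine ⟨hvw, ?_⟩
      rw [Set.mem_singleton_iff, Sym2.eq_iff]
      rintro (⟨-, h2⟩ | ⟨h1, -⟩)
      · exact Sum.inl_ne_inr h2
      · exact Sum.inl_ne_inr h1
    obtain ⟨M, hM, hfM⟩ := hpm _ hf
    obtain ⟨F, hFinv, hFadj, hFuniq, -⟩ := exists_pm_fun hM
    have h1 : F (Sum.inl u) = Sum.inl v0 := forced M hM F hFadj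
    have h2 : F (Sum.inl v0) = Sum.inl w :=
      hFuniq _ _ (SimpleGraph.Subgraph.mem_edgeSet.mp hfM)
    have h3 : F (Sum.inl v0) = Sum.inl u := by
      rw [← h1]; exact hFinv _
    rw [h2] at h3
    exact hwu (Sum.inl_injective h3)
  · push_neg at hw
    have hdv0 : degN T v0 = 1 := by
      have : T.neighborSet v0 = {u} := by
        ext x
        simp only [SimpleGraph.mem_neighborSet, Set.mem_singleton_iff]
        constructor
        · intro h
          by_contra hxu
          exact hxu (hw x h)
        · rintro rfl; exact hv0.symm
      show (T.neighborSet v0).ncard = 1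
      rw [this]; simp
    have hf : s(Sum.inl v0, Sum.inr v0) ∈
        ((leafMatching T).deleteEdges {s(Sum.inl u, Sum.inr u)}).edgeSet := by
      rw [SimpleGraph.mem_edgeSet, SimpleGraph.deleteEdges_adj]
      refine ⟨⟨rfl, hdv0⟩, ?_⟩
      rw [Set.mem_singleton_iff, Sym2.eq_iff]
      rintro (⟨h1, -⟩ | ⟨h1, -⟩)
      · exact hv0.ne' (Sum.inl_injective h1)
      · exact Sum.inl_ne_inr h1
    obtain ⟨M, hM, hfM⟩ := hpm _ hf
    obtain ⟨F, hFinv, hFadj, hFuniq, -⟩ := exists_pm_fun hM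
    have h1 : F (Sum.inl u) = Sum.inl v0 := forced M hM F hFadj
    have h2 : F (Sum.inl v0) = Sum.inr v0 :=
      hFuniq _ _ (SimpleGraph.Subgraph.mem_edgeSet.mp hfM)
    have h3 : F (Sum.inl v0) = Sum.inl u := by
      rw [← h1]; exact hFinv _
    rw [h2] at h3
    exact Sum.inl_ne_inr h3.symm

lemma lm_minimal (hT : T.IsTree) :
    ∀ e ∈ (leafMatching T).edgeSet, ¬ MatchingCovered ((leafMatching T).deleteEdges {e}) := by
  intro e he
  induction e using Sym2.ind with
  | _ x y =>
    rw [SimpleGraph.mem_edgeSet] at he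
    cases x with
    | inl a =>
      cases y with
      | inl b =>
        have hab : T.Adj a b := he
        rintro ⟨-, -, hpm⟩
        have hf : s(Sum.inr a, Sum.inr b) ∈
            ((leafMatching T).deleteEdges {s(Sum.inl a, Sum.inl b)}).edgeSet := by
          rw [SimpleGraph.mem_edgeSet, SimpleGraph.deleteEdges_adj]
          refine ⟨hab, ?_⟩
          rw [Set.mem_singleton_iff, Sym2.eq_iff]
          rintro (⟨h1, -⟩ | ⟨h1, -⟩) <;> exact Sum.inl_ne_inr h1.symm
        obtain ⟨M, hM, hfM⟩ := hpm _ hf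
        obtain ⟨M', hM', hMeq⟩ := pm_transfer hM
        have hpar := lm_parity hT hab hM'
        have hin : s(Sum.inr a, Sum.inr b) ∈ M'.edgeSet := by rw [hMeq]; exact hfM
        have he' : s(Sum.inl a, Sum.inl b) ∈ M.edgeSet := by
          rw [← hMeq]; exact hpar.mpr hin
        have h5 := M.adj_sub (SimpleGraph.Subgraph.mem_edgeSet.mp he')
        rw [SimpleGraph.deleteEdges_adj] at h5
        exact h5.2 rfl
      | inr b =>
        obtain ⟨rfl, hda⟩ := he
        exact lm_del_leaf_edge hT hda
    | inr a =>
      cases y with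
      | inl b =>
        obtain ⟨rfl, hda⟩ := he
        rw [Sym2.eq_swap]
        exact lm_del_leaf_edge hT hda
      | inr b =>
        have hab : T.Adj a b := he
        rintro ⟨-, -, hpm⟩
        have hf : s(Sum.inl a, Sum.inl b) ∈
            ((leafMatching T).deleteEdges {s(Sum.inr a, Sum.inr b)}).edgeSet := by
          rw [SimpleGraph.mem_edgeSet, SimpleGraph.deleteEdges_adj]
          refine ⟨hab, ?_⟩
          rw [Set.mem_singleton_iff, Sym2.eq_iff]
          rintro (⟨h1, -⟩ | ⟨h1, -⟩) <;> exact Sum.inl_ne_inr h1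
        obtain ⟨M, hM, hfM⟩ := hpm _ hf
        obtain ⟨M', hM', hMeq⟩ := pm_transfer hM
        have hpar := lm_parity hT hab hM'
        have hin : s(Sum.inl a, Sum.inl b) ∈ M'.edgeSet := by rw [hMeq]; exact hfM
        have he' : s(Sum.inr a, Sum.inr b) ∈ M.edgeSet := by
          rw [← hMeq]; exact hpar.mp hin
        have h5 := M.adj_sub (SimpleGraph.Subgraph.mem_edgeSet.mp he')
        rw [SimpleGraph.deleteEdges_adj] at h5
        exact h5.2 rfl

end Minimal

section Final
variable {V : Type*} [Fintype V] {T : SimpleGraph V}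

lemma lm_colorable (hT : T.IsTree) : (leafMatching T).Colorable 2 := by
  obtain ⟨C⟩ := tree_colorable (Fintype.card V) T rfl hT
  have haux1 : ∀ x y : Fin 2, x ≠ y → 1 - x ≠ 1 - y := by decide
  have haux2 : ∀ x : Fin 2, x ≠ 1 - x := by decide
  refine ⟨SimpleGraph.Coloring.mk (Sum.elim (fun w => C w) (fun w => 1 - C w)) ?_⟩
  rintro (a | a) (b | b) hab
  · exact C.valid hab
  · obtain ⟨rfl, -⟩ := hab
    exact haux2 _
  · obtain ⟨rfl, -⟩ := hab
    exact (haux2 _).symm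
  · exact haux1 _ _ (C.valid hab)

lemma lm_count (hT : T.IsTree) (hcard : 2 ≤ Fintype.card V)
    (hdeg : ∀ v, degN T v = 1 ∨ degN T v = 3) :
    2 * {x | degN (leafMatching T) x = 2}.ncard = Fintype.card (V ⊕ V) + 4 := by
  classical
  set L : Set V := {w | degN T w = 1} with hL
  have hset : {x | degN (leafMatching T) x = 2} = Sum.inl '' L ∪ Sum.inr '' L := by
    ext x
    cases x with
    | inl w =>
      simp only [Set.mem_setOf_eq, Set.mem_union, Set.mem_image, degN_lm_inl]
      constructor
      · intro h
        by_cases hw : degN T w = 1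
        · exact Or.inl ⟨w, hw, rfl⟩
        · rw [if_neg hw] at h
          rcases hdeg w with h1 | h1
          · exact absurd h1 hw
          · omega
      · rintro (⟨w', hw', h⟩ | ⟨w', hw', h⟩)
        · cases h
          rw [if_pos (show degN T w = 1 from hw')]
        · exact absurd h (by simp)
    | inr w =>
      simp only [Set.mem_setOf_eq, Set.mem_union, Set.mem_image, degN_lm_inr]
      constructor
      · intro h
        by_cases hw : degN T w = 1
        · exact Or.inr ⟨w, hw, rfl⟩
        · rw [if_neg hw] at h
          rcases hdeg w with h1 | h1
          · exact absurd h1 hw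
          · omega
      · rintro (⟨w', hw', h⟩ | ⟨w', hw', h⟩)
        · exact absurd h (by simp)
        · cases h
          rw [if_pos (show degN T w = 1 from hw')]
  have hcard2 : {x | degN (leafMatching T) x = 2}.ncard = 2 * L.ncard := by
    rw [hset, Set.ncard_union_eq ?_ (Set.toFinite _) (Set.toFinite _),
      Set.ncard_image_of_injective _ Sum.inl_injective,
      Set.ncard_image_of_injective _ Sum.inr_injective]
    · ring
    · rw [Set.disjoint_iff_inter_eq_empty]
      ext x
      simp only [Set.mem_inter_iff, Set.mem_image, Set.mem_empty_iff_false, iff_false]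
      rintro ⟨⟨w1, -, h1⟩, ⟨w2, -, h2⟩⟩
      rw [← h2] at h1
      exact Sum.inl_ne_inr h1
  -- degree counting in T
  set Lf : Finset V := Finset.univ.filter (fun w => degN T w = 1) with hLf
  have hLcard : L.ncard = Lf.card := by
    rw [hL, hLf]
    rw [Set.ncard_eq_toFinset_card']
    congr 1
    ext w
    simp
  have hsum := tree_sum_degN hT
  have hsplit : ∑ w, degN T w = Lf.card * 1 + (Fintype.card V - Lf.card) * 3 := by
    rw [← Finset.sum_add_sum_compl Lf (fun w => degN T w)]
    have h1 : ∑ w ∈ Lf, degN T w = Lf.card * 1 := by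
      rw [Finset.sum_congr rfl (fun w hw => (Finset.mem_filter.mp hw).2)]
      simp [mul_comm, hLf]
    have h2 : ∑ w ∈ Lfᶜ, degN T w = (Fintype.card V - Lf.card) * 3 := by
      have : ∀ w ∈ Lfᶜ, degN T w = 3 := by
        intro w hw
        rcases hdeg w with h | h
        · exfalso
          rw [Finset.mem_compl, hLf] at hw
          exact hw (by simp [h])
        · exact h
      rw [Finset.sum_congr rfl this, Finset.sum_const, Finset.card_compl]
      ring
    rw [h1, h2]
  have hle : Lf.card ≤ Fintype.card V := by
    calc Lf.card ≤ (Finset.univ : Finset V).card := Finset.card_le_card (Finset.subset_univ _)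
      _ = Fintype.card V := rfl
  rw [hcard2, hLcard, Fintype.card_sum]
  omega

end Final

/-- The graph obtained from a cubic Halin tree (a nontrivial finite tree all of whose vertices
have degree 1 or 3) by isomorphic leaf matching is a minimal bipartite matching covered graph
with `|V₂| = n/2 + 2`. -/
theorem stmt7 {V : Type*} [Fintype V] (T : SimpleGraph V)
    (hT : T.IsTree) (hcard : 2 ≤ Fintype.card V)
    (hdeg : ∀ v, degN T v = 1 ∨ degN T v = 3) :
    (leafMatching T).Colorable 2 ∧ MinimalMatchingCovered (leafMatching T) ∧
      2 * {x | degN (leafMatching T) x = 2}.ncard = Fintype.card (V ⊕ V) + 4 :=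
  ⟨lm_colorable hT, ⟨lm_matchingCovered hT hcard hdeg, lm_minimal hT⟩,
    lm_count hT hcard hdeg⟩
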